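/- If r = 2, or r is even and n is odd, then the complete balanced r-partite graph K_{n,...,n} (r parts of size n) admits an interval total coloring, and its minimum span satisfies w_τ(K_{n,...,n}) ≤ (3r/2 − 2)n + 2. -/

import Mathlib

namespace ITC

variable {V : Type*}

/-- A total coloring: proper on vertices, edges, and incident vertex-edge pairs. -/
def IsTotalColoring (G : SimpleGraph V) (cv : V → ℕ) (ce : Sym2 V → ℕ) : Prop :=
  (∀ u v, G.Adj u v → cv u ≠ cv v) ∧
  (∀ e f, e ∈ G.edgeSet → f ∈ G.edgeSet → e ≠ f → (∃ w, w ∈ e ∧ w ∈ f) → ce e ≠ ce f) ∧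
  (∀ v e, e ∈ G.edgeSet → v ∈ e → cv v ≠ ce e)

/-- The set of colors on a vertex `v` together with its incident edges. -/
def palette (G : SimpleGraph V) (cv : V → ℕ) (ce : Sym2 V → ℕ) (v : V) : Set ℕ :=
  insert (cv v) {c | ∃ e ∈ G.edgeSet, v ∈ e ∧ ce e = c}

/-- Degree of a vertex. -/
noncomputable def deg (G : SimpleGraph V) (v : V) : ℕ := (G.neighborSet v).ncard

/-- An interval total `t`-coloring. -/
def IsIntervalTotalColoring (G : SimpleGraph V) (t : ℕ) (cv : V → ℕ)
    (ce : Sym2 V → ℕ) : Prop :=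
  IsTotalColoring G cv ce ∧
  (∀ v, cv v ∈ Set.Icc 1 t) ∧ (∀ e ∈ G.edgeSet, ce e ∈ Set.Icc 1 t) ∧
  (∀ c ∈ Set.Icc 1 t, (∃ v, cv v = c) ∨ (∃ e ∈ G.edgeSet, ce e = c)) ∧
  (∀ v, ∃ a, palette G cv ce v = Set.Icc a (a + deg G v))

def HasIntervalTotalColoring (G : SimpleGraph V) (t : ℕ) : Prop :=
  ∃ cv ce, IsIntervalTotalColoring G t cv ce

/-- Minimum span of interval total colorings. -/
noncomputable def wtau (G : SimpleGraph V) : ℕ := sInf {t | HasIntervalTotalColoring G t}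

/-- Maximum span of interval total colorings. -/
noncomputable def Wtau (G : SimpleGraph V) : ℕ := sSup {t | HasIntervalTotalColoring G t}

/-- Total chromatic number: least `k` such that there is a total coloring
with colors in `{1, …, k}`. -/
noncomputable def totalChromaticNumber (G : SimpleGraph V) : ℕ :=
  sInf {k | ∃ cv ce, IsTotalColoring G cv ce ∧ (∀ v, cv v ∈ Set.Icc 1 k) ∧
    ∀ e ∈ G.edgeSet, ce e ∈ Set.Icc 1 k}

/-- A proper edge coloring. -/
def IsProperEdgeColoring (G : SimpleGraph V) (ce : Sym2 V → ℕ) : Prop :=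
  ∀ e f, e ∈ G.edgeSet → f ∈ G.edgeSet → e ≠ f → (∃ w, w ∈ e ∧ w ∈ f) → ce e ≠ ce f

/-- Colors appearing on the edges incident to `v`. -/
def edgePalette (G : SimpleGraph V) (ce : Sym2 V → ℕ) (v : V) : Set ℕ :=
  {c | ∃ e ∈ G.edgeSet, v ∈ e ∧ ce e = c}

/-- An interval (edge) `t`-coloring. -/
def IsIntervalEdgeColoring (G : SimpleGraph V) (t : ℕ) (ce : Sym2 V → ℕ) : Prop :=
  IsProperEdgeColoring G ce ∧
  (∀ e ∈ G.edgeSet, ce e ∈ Set.Icc 1 t) ∧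
  (∀ c ∈ Set.Icc 1 t, ∃ e ∈ G.edgeSet, ce e = c) ∧
  (∀ v, ∃ a, edgePalette G ce v = Set.Icc (a + 1) (a + deg G v))

/-- The hypercube `Q_n`. -/
def hypercube (n : ℕ) : SimpleGraph (Fin n → Bool) where
  Adj u v := ∃! i, u i ≠ v i
  symm := ⟨by
    rintro u v ⟨i, hi, hu⟩
    exact ⟨i, Ne.symm hi, fun j hj => hu j (Ne.symm hj)⟩⟩
  loopless := ⟨by
    rintro u ⟨i, hi, -⟩
    exact hi rfl⟩

/-- The complete graph on `Fin (2*r)` minus the perfect matching joining `i` and `i+r`. -/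
def Kminus (r : ℕ) : SimpleGraph (Fin (2 * r)) where
  Adj i j := i ≠ j ∧ ¬((i : ℕ) + r = (j : ℕ) ∨ (j : ℕ) + r = (i : ℕ))
  symm := ⟨by
    rintro i j ⟨h1, h2⟩
    exact ⟨h1.symm, fun h => h2 h.symm⟩⟩
  loopless := ⟨by
    rintro i ⟨h1, -⟩
    exact h1 rfl⟩

/-- Blow up each vertex of `H` into a copy of `β` (no edges inside copies). -/
def blowup {α : Type*} (H : SimpleGraph α) (β : Type*) : SimpleGraph (α × β) where
  Adj u v := H.Adj u.1 v.1
  symm := ⟨fun _ _ h => H.adj_symm h⟩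
  loopless := ⟨fun u h => H.irrefl h⟩

def Bc (s p q : ℕ) : ℕ :=
  if max p q < s then min p q + max p q
  else if min p q < s then (if max p q = s then 2 * min p q else min p q + max p q - 1)
  else if min p q = s then 2 * max p q - (2 * s + 1)
  else min p q + max p q - (2 * s + 1)

def tau (s p : ℕ) : ℕ := if p < s then p else p - s

def invB (s p c : ℕ) : ℕ :=
  if p < s then (if c = 2 * p then s else if c < p + s then c - p else c + 1 - p)
  else if p = s then (if c % 2 = 0 then c / 2 else s + (c + 1) / 2)
  else (if p ≤ c + 1 then c + 1 - p else if c + 2 * s = 2 * p - 1 then s else c + 2 * s + 1 - p)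

lemma Bc_symm (s p q : ℕ) : Bc s p q = Bc s q p := by
  simp only [Bc, max_comm, min_comm]

lemma Bc_range (s p q : ℕ) (hs : 1 ≤ s) (hp : p < 2 * s) (hq : q < 2 * s) (hpq : p ≠ q) :
    tau s p ≤ Bc s p q ∧ Bc s p q ≤ tau s p + (2 * s - 2) := by
  simp only [Bc, tau, min_def, max_def]
  split_ifs <;> omega

lemma Bc_inj (s p q q' : ℕ) (hs : 1 ≤ s) (hp : p < 2 * s) (hq : q < 2 * s) (hq' : q' < 2 * s)
    (h1 : q ≠ p) (h2 : q' ≠ p) (h : Bc s p q = Bc s p q') : q = q' := by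
  simp only [Bc, min_def, max_def] at h
  split_ifs at h <;> omega

lemma invB_spec (s p c : ℕ) (hs : 1 ≤ s) (hp : p < 2 * s) (h1 : tau s p ≤ c)
    (h2 : c ≤ tau s p + (2 * s - 2)) :
    invB s p c < 2 * s ∧ invB s p c ≠ p ∧ Bc s p (invB s p c) = c := by
  simp only [tau] at h1 h2
  split_ifs at h1 h2 <;>
    unfold invB <;> split_ifs <;>
    refine ⟨by omega, by omega, ?_⟩ <;>
    · simp only [Bc, min_def, max_def]
      split_ifs <;> omega

/-- vertex color -/
def cvF (s n : ℕ) (v : Σ _ : Fin (2 * s), Fin n) : ℕ :=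
  if (v.1 : ℕ) < s then n * (v.1 : ℕ) + 1 else n * ((v.1 : ℕ) - s) + 2 + n * (2 * s - 1)

/-- edge color -/
def ceF (s n : ℕ) : Sym2 (Σ _ : Fin (2 * s), Fin n) → ℕ :=
  Sym2.lift ⟨fun u v => n * Bc s (u.1 : ℕ) (v.1 : ℕ) + ((u.2 : ℕ) + (v.2 : ℕ)) % n + 2,
    fun u v => by dsimp only; rw [Bc_symm, Nat.add_comm (u.2 : ℕ)]⟩

lemma ceF_mk (s n : ℕ) (u v : Σ _ : Fin (2 * s), Fin n) :
    ceF s n s(u, v) = n * Bc s (u.1 : ℕ) (v.1 : ℕ) + ((u.2 : ℕ) + (v.2 : ℕ)) % n + 2 := rfl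

abbrev Gr (s n : ℕ) : SimpleGraph (Σ _ : Fin (2 * s), Fin n) :=
  SimpleGraph.completeMultipartiteGraph (fun _ : Fin (2 * s) => Fin n)

lemma Gr_adj (s n : ℕ) (u v : Σ _ : Fin (2 * s), Fin n) :
    (Gr s n).Adj u v ↔ u.1 ≠ v.1 := Iff.rfl

lemma deg_eq (s n : ℕ) (v : Σ _ : Fin (2 * s), Fin n) :
    deg (Gr s n) v = n * (2 * s - 1) := by
  have h1 : (Gr s n).neighborSet v = {w : Σ _ : Fin (2 * s), Fin n | v.1 ≠ w.1} := rfl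
  rw [deg, h1, ← Nat.card_coe_set_eq]
  have e : {w : Σ _ : Fin (2 * s), Fin n | v.1 ≠ w.1} ≃ {q : Fin (2 * s) // ¬ (q = v.1)} × Fin n :=
    { toFun := fun w => (⟨w.1.1, fun h => w.2 h.symm⟩, w.1.2),
      invFun := fun x => ⟨⟨x.1.1, x.2⟩, fun h => x.1.2 h.symm⟩,
      left_inv := fun w => rfl,
      right_inv := fun x => rfl }
  rw [Nat.card_congr e, Nat.card_prod, Nat.card_eq_fintype_card, Nat.card_eq_fintype_card,
    Fintype.card_subtype_compl, Fintype.card_subtype_eq, Fintype.card_fin, Fintype.card_fin,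
    Nat.mul_comm]

/-- membership in the incident-edge color set -/
lemma mem_E_iff (s n : ℕ) (v : Σ _ : Fin (2 * s), Fin n) (c : ℕ) :
    (∃ e ∈ (Gr s n).edgeSet, v ∈ e ∧ ceF s n e = c) ↔
      ∃ w : Σ _ : Fin (2 * s), Fin n, v.1 ≠ w.1 ∧
        n * Bc s (v.1 : ℕ) (w.1 : ℕ) + ((v.2 : ℕ) + (w.2 : ℕ)) % n + 2 = c := by
  constructor
  · rintro ⟨e, he, hv, rfl⟩
    obtain ⟨w, rfl⟩ := Sym2.mem_iff_exists.mp hv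
    exact ⟨w, (SimpleGraph.mem_edgeSet _).mp he, rfl⟩
  · rintro ⟨w, hw, hc⟩
    exact ⟨s(v, w), hw, Sym2.mem_mk_left v w, hc⟩


lemma nk_ne (n k k' x y : ℕ) (hn : 0 < n) (hx : x < n) (hy : y < n) (h : k ≠ k') :
    n * k + x ≠ n * k' + y := by
  intro hE
  apply h
  have h1 : (n * k + x) / n = k := by rw [Nat.mul_add_div hn, Nat.div_eq_of_lt hx, Nat.add_zero]
  have h2 : (n * k' + y) / n = k' := by rw [Nat.mul_add_div hn, Nat.div_eq_of_lt hy, Nat.add_zero]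
  rw [hE] at h1
  exact h1.symm.trans h2

lemma mod_cancel (n a b c : ℕ) (hb : b < n) (hc : c < n) (h : (a + b) % n = (a + c) % n) :
    b = c := by
  have h2 : b ≡ c [MOD n] := Nat.ModEq.add_left_cancel' a h
  rwa [Nat.ModEq, Nat.mod_eq_of_lt hb, Nat.mod_eq_of_lt hc] at h2

lemma E_eq (s n : ℕ) (hs : 1 ≤ s) (hn : 0 < n) (v : Σ _ : Fin (2 * s), Fin n) :
    {c | ∃ e ∈ (Gr s n).edgeSet, v ∈ e ∧ ceF s n e = c} =
      Set.Icc (n * tau s (v.1 : ℕ) + 2) (n * tau s (v.1 : ℕ) + 1 + n * (2 * s - 1)) := by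
  ext c
  simp only [Set.mem_setOf_eq, Set.mem_Icc]
  rw [mem_E_iff]
  constructor
  · rintro ⟨w, hw, rfl⟩
    have hw' : (v.1 : ℕ) ≠ (w.1 : ℕ) := fun h => hw (Fin.val_injective h)
    obtain ⟨hk1, hk2⟩ := Bc_range s (v.1 : ℕ) (w.1 : ℕ) hs v.1.isLt w.1.isLt hw'
    have hm : ((v.2 : ℕ) + (w.2 : ℕ)) % n < n := Nat.mod_lt _ hn
    have a1 : n * tau s (v.1:ℕ) ≤ n * Bc s (v.1:ℕ) (w.1:ℕ) := Nat.mul_le_mul_left n hk1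
    have a2 : n * Bc s (v.1:ℕ) (w.1:ℕ) ≤ n * (tau s (v.1:ℕ) + (2*s-2)) :=
      Nat.mul_le_mul_left n hk2
    have a3 : n * (tau s (v.1:ℕ) + (2*s-2)) + n = n * (tau s (v.1:ℕ) + (2*s-2) + 1) :=
      (Nat.mul_succ n _).symm
    have a4 : n * (tau s (v.1:ℕ) + (2*s-2) + 1) = n * tau s (v.1:ℕ) + n * (2*s-1) := by
      rw [show tau s (v.1:ℕ) + (2*s-2) + 1 = tau s (v.1:ℕ) + (2*s-1) by omega, Nat.mul_add]
    omega
  · rintro ⟨h1, h2⟩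
    have h2c : 2 ≤ c := by omega
    have hmn : (c - 2) % n < n := Nat.mod_lt _ hn
    have hdm : n * ((c - 2) / n) + (c - 2) % n = c - 2 := Nat.div_add_mod _ n
    have hk1 : tau s (v.1:ℕ) ≤ (c - 2) / n := by
      rw [Nat.le_div_iff_mul_le hn]
      have e2 : tau s (v.1:ℕ) * n = n * tau s (v.1:ℕ) := Nat.mul_comm _ _
      omega
    have hk2 : (c - 2) / n ≤ tau s (v.1:ℕ) + (2*s-2) := by
      have hlt : c - 2 < (tau s (v.1:ℕ) + (2*s-2) + 1) * n := by
        have e1 : (tau s (v.1:ℕ) + (2*s-2) + 1) * n = n * (tau s (v.1:ℕ) + (2*s-2) + 1) :=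
          Nat.mul_comm _ _
        have a4 : n * (tau s (v.1:ℕ) + (2*s-2) + 1) = n * tau s (v.1:ℕ) + n * (2*s-1) := by
          rw [show tau s (v.1:ℕ) + (2*s-2) + 1 = tau s (v.1:ℕ) + (2*s-1) by omega, Nat.mul_add]
        omega
      exact Nat.lt_succ_iff.mp ((Nat.div_lt_iff_lt_mul hn).mpr hlt)
    obtain ⟨hq1, hq2, hq3⟩ := invB_spec s (v.1:ℕ) ((c-2)/n) hs v.1.isLt hk1 hk2
    have hi : (v.2 : ℕ) < n := v.2.isLt
    have hj : ((c-2) % n + n - (v.2:ℕ)) % n < n := Nat.mod_lt _ hn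
    refine ⟨⟨⟨invB s (v.1:ℕ) ((c-2)/n), hq1⟩, ⟨((c-2) % n + n - (v.2:ℕ)) % n, hj⟩⟩, ?_, ?_⟩
    · intro h
      exact hq2 (congrArg Fin.val h).symm
    · simp only [Fin.val_mk]
      rw [hq3]
      have hij : ((v.2:ℕ) + ((c-2) % n + n - (v.2:ℕ)) % n) % n = (c-2) % n := by
        rw [Nat.add_mod_mod,
          show (v.2:ℕ) + ((c-2) % n + n - (v.2:ℕ)) = (c-2) % n + n by omega,
          Nat.add_mod_right, Nat.mod_eq_of_lt hmn]
      rw [hij]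
      omega

lemma tau_le (s p : ℕ) (hs : 1 ≤ s) (hp : p < 2 * s) : tau s p ≤ s - 1 := by
  simp only [tau]; split_ifs <;> omega

lemma cvF_eq (s n : ℕ) (v : Σ _ : Fin (2 * s), Fin n) :
    cvF s n v = if (v.1 : ℕ) < s then n * tau s (v.1:ℕ) + 1
      else n * tau s (v.1:ℕ) + 2 + n * (2 * s - 1) := by
  simp only [cvF, tau]
  split_ifs <;> ring

lemma main (s n : ℕ) (hs : 1 ≤ s) (hn : 0 < n) :
    HasIntervalTotalColoring (Gr s n) ((3 * s - 2) * n + 2) := by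
  have hmul : ∀ a b : ℕ, a ≤ b → n * a ≤ n * b := fun a b h => Nat.mul_le_mul_left n h
  have h32 : (3 * s - 2) * n = n * (3 * s - 2) := Nat.mul_comm _ _
  have h3s : n * (s - 1) + n * (2 * s - 1) = n * (3 * s - 2) := by
    rw [← Nat.mul_add]; congr 1; omega
  have h3t : n * (3 * s - 3) + n = n * (3 * s - 2) := by
    rw [← Nat.mul_succ]; congr 1; omega
  refine ⟨cvF s n, ceF s n, ⟨?_, ?_, ?_⟩, ?_, ?_, ?_, ?_⟩
  · -- vertex proper
    intro u v huv
    have h : (u.1 : ℕ) ≠ (v.1 : ℕ) := fun hh => huv (Fin.val_injective hh)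
    have hu : (u.1 : ℕ) < 2 * s := u.1.isLt
    have hv : (v.1 : ℕ) < 2 * s := v.1.isLt
    rw [cvF_eq, cvF_eq]
    have htu : tau s (u.1:ℕ) ≤ s - 1 := tau_le s _ hs hu
    have htv : tau s (v.1:ℕ) ≤ s - 1 := tau_le s _ hs hv
    have m1 := hmul _ _ htu
    have m2 := hmul _ _ htv
    have hsle : n * (s - 1) ≤ n * (2 * s - 1) := hmul _ _ (by omega)
    split_ifs with g1 g2 g2
    · intro hE
      apply h
      have : n * tau s (u.1:ℕ) = n * tau s (v.1:ℕ) := by omega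
      have := Nat.eq_of_mul_eq_mul_left hn this
      simp only [tau, if_pos g1, if_pos g2] at this; omega
    · omega
    · omega
    · intro hE
      apply h
      have : n * tau s (u.1:ℕ) = n * tau s (v.1:ℕ) := by omega
      have := Nat.eq_of_mul_eq_mul_left hn this
      simp only [tau, if_neg g1, if_neg g2] at this; omega
  · -- edge proper
    intro e f he hf hef ⟨w, hwe, hwf⟩
    obtain ⟨x, rfl⟩ := Sym2.mem_iff_exists.mp hwe
    obtain ⟨y, rfl⟩ := Sym2.mem_iff_exists.mp hwf
    rw [SimpleGraph.mem_edgeSet] at he hf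
    have hx : (x.1 : ℕ) ≠ (w.1 : ℕ) := fun hh => he (Fin.val_injective hh).symm
    have hy : (y.1 : ℕ) ≠ (w.1 : ℕ) := fun hh => hf (Fin.val_injective hh).symm
    rw [ceF_mk, ceF_mk]
    have hmx : ((w.2:ℕ) + (x.2:ℕ)) % n < n := Nat.mod_lt _ hn
    have hmy : ((w.2:ℕ) + (y.2:ℕ)) % n < n := Nat.mod_lt _ hn
    by_cases hq : (x.1 : ℕ) = (y.1 : ℕ)
    · -- same part: second coordinates differ
      have hq' : x.1 = y.1 := Fin.val_injective hq
      have hxy2 : (x.2 : ℕ) ≠ (y.2 : ℕ) := by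
        intro hh
        apply hef
        have : x = y := Sigma.ext hq' (by
          have : x.2 = y.2 := Fin.val_injective hh
          exact heq_of_eq this)
        rw [this]
      intro hE
      rw [hq] at hE
      have : ((w.2:ℕ) + (x.2:ℕ)) % n = ((w.2:ℕ) + (y.2:ℕ)) % n := by omega
      exact hxy2 (mod_cancel n _ _ _ x.2.isLt y.2.isLt this)
    · -- different parts
      have hB : Bc s (w.1:ℕ) (x.1:ℕ) ≠ Bc s (w.1:ℕ) (y.1:ℕ) := fun hh =>
        hq (Bc_inj s (w.1:ℕ) (x.1:ℕ) (y.1:ℕ) hs w.1.isLt x.1.isLt y.1.isLt hx hy hh)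
      intro hE
      have : n * Bc s (w.1:ℕ) (x.1:ℕ) + ((w.2:ℕ) + (x.2:ℕ)) % n
           = n * Bc s (w.1:ℕ) (y.1:ℕ) + ((w.2:ℕ) + (y.2:ℕ)) % n := by omega
      exact nk_ne n _ _ _ _ hn hmx hmy hB this
  · -- vertex / incident edge
    intro v e he hv
    obtain ⟨w, rfl⟩ := Sym2.mem_iff_exists.mp hv
    rw [SimpleGraph.mem_edgeSet] at he
    have hw : (v.1 : ℕ) ≠ (w.1 : ℕ) := fun hh => he (Fin.val_injective hh)
    obtain ⟨hk1, hk2⟩ := Bc_range s (v.1:ℕ) (w.1:ℕ) hs v.1.isLt w.1.isLt hw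
    have hm : ((v.2:ℕ) + (w.2:ℕ)) % n < n := Nat.mod_lt _ hn
    have a1 := hmul _ _ hk1
    have a2 := hmul _ _ hk2
    have a4 : n * (tau s (v.1:ℕ) + (2*s-2) + 1) = n * tau s (v.1:ℕ) + n * (2*s-1) := by
      rw [show tau s (v.1:ℕ) + (2*s-2) + 1 = tau s (v.1:ℕ) + (2*s-1) by omega, Nat.mul_add]
    have a3 : n * (tau s (v.1:ℕ) + (2*s-2)) + n = n * (tau s (v.1:ℕ) + (2*s-2) + 1) :=
      (Nat.mul_succ n _).symm
    rw [cvF_eq, ceF_mk]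
    split_ifs <;> omega
  · -- vertex colors in range
    intro v
    rw [Set.mem_Icc, cvF_eq]
    have htv : tau s (v.1:ℕ) ≤ s - 1 := tau_le s _ hs v.1.isLt
    have m2 := hmul _ _ htv
    split_ifs <;> omega
  · -- edge colors in range
    intro e
    induction e using Sym2.ind with
    | _ u v =>
      intro he
      rw [SimpleGraph.mem_edgeSet] at he
      have hw : (u.1 : ℕ) ≠ (v.1 : ℕ) := fun hh => he (Fin.val_injective hh)
      obtain ⟨hk1, hk2⟩ := Bc_range s (u.1:ℕ) (v.1:ℕ) hs u.1.isLt v.1.isLt hw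
      have htv : tau s (u.1:ℕ) ≤ s - 1 := tau_le s _ hs u.1.isLt
      have hm : ((u.2:ℕ) + (v.2:ℕ)) % n < n := Nat.mod_lt _ hn
      have a2 : n * Bc s (u.1:ℕ) (v.1:ℕ) ≤ n * (3*s-3) := hmul _ _ (by omega)
      rw [Set.mem_Icc, ceF_mk]
      omega
  · -- all colors used
    intro c hc
    rw [Set.mem_Icc] at hc
    by_cases hc1 : c = 1
    · exact Or.inl ⟨⟨⟨0, by omega⟩, ⟨0, hn⟩⟩, by simp only [cvF, Fin.val_mk]; rw [if_pos (by omega : (0:ℕ) < s)]; omega⟩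
    · by_cases hct : c = (3 * s - 2) * n + 2
      · refine Or.inl ⟨⟨⟨2 * s - 1, by omega⟩, ⟨0, hn⟩⟩, ?_⟩
        simp only [cvF, Fin.val_mk]
        rw [if_neg (by omega)]
        rw [show (2 * s - 1 - s) = s - 1 by omega, hct]
        omega
      · right
        have h2c : 2 ≤ c := by omega
        have hcu : c ≤ (3 * s - 2) * n + 1 := by omega
        have hdm : n * ((c - 2) / n) + (c - 2) % n = c - 2 := Nat.div_add_mod _ n
        have hmn : (c - 2) % n < n := Nat.mod_lt _ hn
        have hkb : (c - 2) / n < 3 * s - 2 := by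
          rw [Nat.div_lt_iff_lt_mul hn]
          have : (3 * s - 2) * n = n * (3 * s - 2) := Nat.mul_comm _ _
          omega
        set k := (c - 2) / n with hk
        set p := min k (s - 1) with hp
        have hps : p < s := by omega
        have htp : tau s p = p := by simp only [tau]; rw [if_pos hps]
        obtain ⟨hq1, hq2, hq3⟩ := invB_spec s p k hs (by omega) (by omega) (by omega)
        refine ⟨s(⟨⟨p, by omega⟩, ⟨0, hn⟩⟩, ⟨⟨invB s p k, hq1⟩, ⟨(c-2) % n, hmn⟩⟩), ?_, ?_⟩
        · rw [SimpleGraph.mem_edgeSet]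
          intro hh
          have h2 : p = invB s p k := by
            simpa using congrArg Fin.val hh
          exact hq2 h2.symm
        · rw [ceF_mk]
          simp only [Fin.val_mk]
          rw [hq3, Nat.zero_add, Nat.mod_eq_of_lt hmn]
          omega
  · -- palettes are intervals
    intro v
    have hdeg : deg (Gr s n) v = n * (2 * s - 1) := deg_eq s n v
    have hpal : palette (Gr s n) (cvF s n) (ceF s n) v
        = insert (cvF s n v)
            (Set.Icc (n * tau s (v.1:ℕ) + 2) (n * tau s (v.1:ℕ) + 1 + n * (2*s-1))) := by
      simp only [palette]
      rw [E_eq s n hs hn v]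
    by_cases hl : (v.1 : ℕ) < s
    · refine ⟨n * tau s (v.1:ℕ) + 1, ?_⟩
      rw [hpal, cvF_eq, if_pos hl, hdeg]
      ext x
      simp only [Set.mem_insert_iff, Set.mem_Icc]
      omega
    · refine ⟨n * tau s (v.1:ℕ) + 2, ?_⟩
      rw [hpal, cvF_eq, if_neg hl, hdeg]
      ext x
      simp only [Set.mem_insert_iff, Set.mem_Icc]
      omega

theorem stmt5 (r n : ℕ) (hr : 2 ≤ r) (hn : 0 < n)
    (h : r = 2 ∨ (Even r ∧ Odd n)) :
    (∃ t, HasIntervalTotalColoring (SimpleGraph.completeMultipartiteGraph (fun _ : Fin r => Fin n)) t) ∧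
    wtau (SimpleGraph.completeMultipartiteGraph (fun _ : Fin r => Fin n)) ≤ (3 * r / 2 - 2) * n + 2 := by
  obtain ⟨s, rfl⟩ : ∃ s, r = 2 * s := by
    rcases h with h | ⟨⟨k, hk⟩, -⟩
    · exact ⟨1, by omega⟩
    · exact ⟨k, by omega⟩
  have hs : 1 ≤ s := by omega
  have hmem := main s n hs hn
  have hb : 3 * (2 * s) / 2 - 2 = 3 * s - 2 := by omega
  constructor
  · exact ⟨_, hmem⟩
  · rw [hb]
    exact Nat.sInf_le hmem
end ITC
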